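/- Let $g(z)=e^{\frac{z+1}{z-1}}$ on the open unit disk $\mathbb{D}$, and fix $0<r<1$, so that $D=B(1-r;r)$ is an open disk contained in $\mathbb{D}$ and tangent to the unit circle at $1$. Then $\mathbb{D}\setminus D$ is a path divergence set for $g$ at $1$: for every path $\gamma$ in the disk from $-1$ to $1$ with $\gamma(s)\notin D$ for all $s\in(0,1)$, the limit $\lim_{s\to 1^-} g(\gamma(s))$ does not exist. -/

import Mathlib

open Set Metric Filter Topology

/-- For `g z = exp ((z+1)/(z-1))` and `0 < r < 1`, the complement in the
disk of the tangent disk `B(1-r; r)` is a path divergence set for `g` at `1`: along every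
path `γ` in the disk from `-1` to `1` avoiding `B(1-r; r)`, `g (γ s)` has no limit as
`s → 1⁻`. -/
lemma re_bounds {r : ℝ} (hr0 : 0 < r) {z : ℂ} (hz : z ∈ ball (0:ℂ) 1)
    (hz2 : z ∉ ball (1 - (r:ℂ)) r) :
    -((1-r)/r) ≤ ((z+1)/(z-1)).re ∧ ((z+1)/(z-1)).re < 0 := by
  rw [mem_ball, dist_zero_right] at hz
  rw [mem_ball, not_lt, dist_eq_norm] at hz2
  have hz1 : z ≠ 1 := by rintro rfl; simp at hz
  have hns : 0 < Complex.normSq (z - 1) := by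
    rwa [Complex.normSq_pos, sub_ne_zero]
  have hx : z.re * z.re + z.im * z.im < 1 := by
    have h1 : Complex.normSq z < 1 := by
      have := Complex.sq_norm z
      nlinarith [norm_nonneg z]
    simpa [Complex.normSq_apply] using h1
  have hy : r * r ≤ (z.re - (1 - r)) * (z.re - (1 - r)) + z.im * z.im := by
    have h1 : r ^ 2 ≤ Complex.normSq (z - (1 - (r:ℂ))) := by
      have := Complex.sq_norm (z - (1 - (r:ℂ)))
      nlinarith [norm_nonneg (z - (1 - (r:ℂ)))]
    have h2 : Complex.normSq (z - (1 - (r:ℂ))) =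
        (z.re - (1 - r)) * (z.re - (1 - r)) + z.im * z.im := by
      simp [Complex.normSq_apply, Complex.sub_re, Complex.sub_im]
    nlinarith [h1, h2]
  have hNS : Complex.normSq (z-1) = (z.re - 1) * (z.re - 1) + z.im * z.im := by
    simp [Complex.normSq_apply, Complex.sub_re, Complex.sub_im]
  have hre : ((z+1)/(z-1)).re =
      ((z.re + 1) * (z.re - 1) + z.im * z.im) / Complex.normSq (z-1) := by
    rw [Complex.div_re]
    simp [Complex.add_re, Complex.sub_re, Complex.add_im, Complex.sub_im]
    ring
  rw [hre]
  constructor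
  · rw [← neg_div, div_le_div_iff₀ hr0 hns, hNS]; nlinarith
  · apply div_neg_of_neg_of_pos _ hns
    nlinarith

theorem complement_of_tangent_disk_path_divergence
    (r : ℝ) (hr0 : 0 < r) (hr1 : r < 1)
    (γ : ℝ → ℂ)
    (hγc : ContinuousOn γ (Icc 0 1)) (hγ0 : γ 0 = -1) (hγ1 : γ 1 = 1)
    (hγD : ∀ s ∈ Ioo (0:ℝ) 1, γ s ∈ ball (0:ℂ) 1)
    (hγavoid : ∀ s ∈ Ioo (0:ℝ) 1, γ s ∉ ball (1 - (r:ℂ)) r) :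
    ¬ ∃ L : ℂ, Tendsto (fun s => Complex.exp ((γ s + 1) / (γ s - 1)))
      (nhdsWithin 1 (Iio 1)) (nhds L) := by
  rintro ⟨L, hL⟩
  set c : ℝ := (1 - r) / r with hc
  set w : ℝ → ℂ := fun s => (γ s + 1) / (γ s - 1) with hwdef
  set v : ℝ → ℝ := fun s => (w s).im with hvdef
  have hcpos : 0 < c := div_pos (by linarith) hr0
  have hne1 : ∀ s ∈ Ioo (0:ℝ) 1, γ s ≠ 1 := by
    intro s hs h
    have := hγD s hs
    rw [mem_ball, dist_zero_right, h] at this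
    simp at this
  have hub : ∀ s ∈ Ioo (0:ℝ) 1, -c ≤ (w s).re ∧ (w s).re < 0 := fun s hs =>
    re_bounds hr0 (hγD s hs) (hγavoid s hs)
  -- Ioo 0 1 is a neighborhood of 1 within Iio 1
  have hIoo : Ioo (0:ℝ) 1 ∈ 𝓝[<] (1:ℝ) := Ioo_mem_nhdsLT_of_mem (by constructor <;> norm_num)
  -- γ tends to 1
  have hγt : Tendsto γ (𝓝[<] (1:ℝ)) (𝓝 1) := by
    have h1 : Tendsto γ (𝓝[Icc (0:ℝ) 1] 1) (𝓝 1) := by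
      have := hγc.continuousWithinAt (x := 1) (by constructor <;> norm_num)
      rwa [ContinuousWithinAt, hγ1] at this
    apply h1.mono_left
    refine le_trans ?_ (nhdsWithin_mono _ Ioo_subset_Icc_self)
    rw [← nhdsWithin_Ioo_eq_nhdsLT (by norm_num : (0:ℝ) < 1)]
  -- |w s| → ∞
  have hwt : Tendsto (fun s => ‖w s‖) (𝓝[<] (1:ℝ)) atTop := by
    have hnum : Tendsto (fun s => ‖γ s + 1‖) (𝓝[<] (1:ℝ)) (𝓝 2) := by
      have : Tendsto (fun s => γ s + 1) (𝓝[<] (1:ℝ)) (𝓝 2) := by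
        have := hγt.add (tendsto_const_nhds (x := (1:ℂ)))
        norm_num at this; exact this
      have h2 : ‖(2:ℂ)‖ = 2 := by norm_num
      exact h2 ▸ (continuous_norm.tendsto 2).comp this
    have hden : Tendsto (fun s => ‖γ s - 1‖) (𝓝[<] (1:ℝ)) (𝓝[>] 0) := by
      apply tendsto_nhdsWithin_of_tendsto_nhds_of_eventually_within
      · have : Tendsto (fun s => γ s - 1) (𝓝[<] (1:ℝ)) (𝓝 0) := by
          have := hγt.sub (tendsto_const_nhds (x := (1:ℂ)))
          norm_num at this; exact this
        have h0 : ‖(0:ℂ)‖ = 0 := by norm_num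
        exact h0 ▸ (continuous_norm.tendsto 0).comp this
      · filter_upwards [hIoo] with s hs
        simpa [sub_ne_zero] using hne1 s hs
    have hinv : Tendsto (fun s => (‖γ s - 1‖)⁻¹) (𝓝[<] (1:ℝ)) atTop :=
      tendsto_inv_nhdsGT_zero.comp hden
    have := hnum.pos_mul_atTop (by norm_num : (0:ℝ) < 2) hinv
    refine this.congr fun s => ?_
    rw [hwdef]
    simp [norm_div, div_eq_mul_inv]
  -- |v s| → ∞
  have hvt : Tendsto (fun s => |v s|) (𝓝[<] (1:ℝ)) atTop := by
    apply tendsto_atTop_mono' _ _ (hwt.atTop_add tendsto_const_nhds (C := -c))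
    filter_upwards [hIoo] with s hs
    have h1 := Complex.norm_le_abs_re_add_abs_im (w s)
    have h2 : |(w s).re| ≤ c := by
      rcases hub s hs with ⟨ha, hb⟩
      rw [abs_le]; constructor <;> linarith
    simp only [hvdef]
    linarith
  -- continuity of v on subintervals
  have hvcont : ∀ a b : ℝ, 0 < a → b < 1 → ContinuousOn v (Icc a b) := by
    intro a b ha hb
    have hsub : Icc a b ⊆ Ioo 0 1 := fun s hs => ⟨lt_of_lt_of_le ha hs.1, lt_of_le_of_lt hs.2 hb⟩
    have hsub2 : Icc a b ⊆ Icc 0 1 := hsub.trans Ioo_subset_Icc_self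
    have hγ' : ContinuousOn γ (Icc a b) := hγc.mono hsub2
    have hw' : ContinuousOn w (Icc a b) := by
      apply (hγ'.add continuousOn_const).div (hγ'.sub continuousOn_const)
      intro s hs
      simpa [sub_ne_zero] using hne1 s (hsub hs)
    exact Complex.continuous_im.comp_continuousOn hw'
  -- key: points near 1 where exp(w) has real part ≥ exp(-c) resp. ≤ -exp(-c)
  have key : ∀ a ∈ Ioo (0:ℝ) 1,
      (∃ s ∈ Ico a 1, Real.exp (-c) ≤ (Complex.exp (w s)).re) ∧
      (∃ s ∈ Ico a 1, (Complex.exp (w s)).re ≤ -Real.exp (-c)) := by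
    intro a ha
    set π := Real.pi
    have hπ := Real.pi_pos
    -- find b ∈ Ioo a 1 with |v b| large
    have hev : ∀ᶠ s in 𝓝[<] (1:ℝ), |v a| + 4*π + 1 ≤ |v s| := hvt.eventually_ge_atTop _
    have hmem : (Ioo a 1 ∩ {s | |v a| + 4*π + 1 ≤ |v s|}) ∈ 𝓝[<] (1:ℝ) :=
      inter_mem (Ioo_mem_nhdsLT_of_mem ⟨ha.2, le_refl _⟩) hev
    obtain ⟨b, hb, hbv⟩ := (nhdsLT_neBot (1:ℝ)).nonempty_of_mem hmem
    have hab : a ≤ b := le_of_lt hb.1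
    have hcont : ContinuousOn v (Icc a b) := hvcont a b ha.1 hb.2
    have hIVT := intermediate_value_uIcc (f := v) (a := a) (b := b)
      (by rwa [uIcc_of_le hab])
    rw [uIcc_of_le hab] at hIVT
    set m := min (v a) (v b) with hm
    set M := max (v a) (v b) with hM
    have hMm : m + 4*π + 1 ≤ M := by
      have h1 : M - m = |v b - v a| := max_sub_min_eq_abs _ _
      have h2 : |v b| - |v a| ≤ |v b - v a| := abs_sub_abs_le_abs_sub _ _
      have := hbv
      simp only [mem_setOf_eq] at this
      linarith
    set k : ℤ := ⌈m / (2*π)⌉ with hk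
    have ht1m : m ≤ (k:ℝ) * (2*π) := by
      have := Int.le_ceil (m / (2*π))
      rw [div_le_iff₀ (by linarith : (0:ℝ) < 2*π)] at this
      linarith
    have ht1M : (k:ℝ) * (2*π) ≤ m + 2*π := by
      have := Int.ceil_lt_add_one (m / (2*π))
      have h2 : (k:ℝ) < m / (2*π) + 1 := by exact_mod_cast this
      have h3 := mul_lt_mul_of_pos_right h2 (show (0:ℝ) < 2*π by linarith)
      rw [add_mul, div_mul_cancel₀ _ (by positivity : (2:ℝ)*π ≠ 0), one_mul] at h3
      linarith
    have hmem1 : (k:ℝ) * (2*π) ∈ Icc m M := ⟨ht1m, by linarith⟩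
    have hmem2 : (k:ℝ) * (2*π) + π ∈ Icc m M := ⟨by linarith, by linarith⟩
    have h1 : (k:ℝ) * (2*π) ∈ uIcc (v a) (v b) := by rwa [uIcc, ← hm, ← hM]
    have h2 : (k:ℝ) * (2*π) + π ∈ uIcc (v a) (v b) := by rwa [uIcc, ← hm, ← hM]
    obtain ⟨s1, hs1, hv1⟩ := hIVT h1
    obtain ⟨s2, hs2, hv2⟩ := hIVT h2
    have hs1' : s1 ∈ Ico a 1 := ⟨hs1.1, lt_of_le_of_lt hs1.2 hb.2⟩
    have hs2' : s2 ∈ Ico a 1 := ⟨hs2.1, lt_of_le_of_lt hs2.2 hb.2⟩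
    have hIoo1 : s1 ∈ Ioo (0:ℝ) 1 := ⟨lt_of_lt_of_le ha.1 hs1.1, hs1'.2⟩
    have hIoo2 : s2 ∈ Ioo (0:ℝ) 1 := ⟨lt_of_lt_of_le ha.1 hs2.1, hs2'.2⟩
    constructor
    · refine ⟨s1, hs1', ?_⟩
      rw [Complex.exp_re]
      have : Real.cos (w s1).im = 1 := by
        show Real.cos (v s1) = 1
        rw [hv1]; exact Real.cos_int_mul_two_pi k
      rw [this, mul_one]
      exact Real.exp_le_exp.2 (hub s1 hIoo1).1
    · refine ⟨s2, hs2', ?_⟩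
      rw [Complex.exp_re]
      have : Real.cos (w s2).im = -1 := by
        show Real.cos (v s2) = -1
        rw [hv2]; exact Real.cos_int_mul_two_pi_add_pi k
      rw [this, mul_neg_one]
      have := Real.exp_le_exp.2 (hub s2 hIoo2).1
      linarith
  -- turn into frequently statements
  have hfr : ∀ (p : ℝ → Prop), (∀ a ∈ Ioo (0:ℝ) 1, ∃ s ∈ Ico a 1, p s) →
      ∃ᶠ s in 𝓝[<] (1:ℝ), p s := by
    intro p hp
    rw [frequently_iff]
    intro U hU
    obtain ⟨a', ha', hsub⟩ := mem_nhdsLT_iff_exists_Ioo_subset.1 hU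
    set a := (max a' 0 + 1) / 2 with hadef
    have ha0 : 0 < a := by
      have : (0:ℝ) ≤ max a' 0 := le_max_right _ _
      rw [hadef]; linarith
    have ha1 : a < 1 := by
      have : max a' 0 < 1 := max_lt ha' (by norm_num)
      rw [hadef]; linarith
    have haa' : a' < a := by
      have : a' ≤ max a' 0 := le_max_left _ _
      rw [hadef]; linarith
    obtain ⟨s, hs, hps⟩ := hp a ⟨ha0, ha1⟩
    exact ⟨s, hsub ⟨lt_of_lt_of_le haa' hs.1, hs.2⟩, hps⟩
  have hf1 : ∃ᶠ s in 𝓝[<] (1:ℝ), Real.exp (-c) ≤ (Complex.exp (w s)).re :=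
    hfr _ (fun a ha => (key a ha).1)
  have hf2 : ∃ᶠ s in 𝓝[<] (1:ℝ), (Complex.exp (w s)).re ≤ -Real.exp (-c) :=
    hfr _ (fun a ha => (key a ha).2)
  -- limit of real parts
  have hLre : Tendsto (fun s => (Complex.exp (w s)).re) (𝓝[<] (1:ℝ)) (𝓝 L.re) :=
    (Complex.continuous_re.tendsto L).comp hL
  have hge : Real.exp (-c) ≤ L.re := by
    have hnb := frequently_iff_neBot.1 hf1
    refine ge_of_tendsto
      (hLre.mono_left (inf_le_left (b := 𝓟 {s | Real.exp (-c) ≤ (Complex.exp (w s)).re}))) ?_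
    exact eventually_inf_principal.2 (Eventually.of_forall fun s hs => hs)
  have hle : L.re ≤ -Real.exp (-c) := by
    have hnb := frequently_iff_neBot.1 hf2
    refine le_of_tendsto
      (hLre.mono_left (inf_le_left (b := 𝓟 {s | (Complex.exp (w s)).re ≤ -Real.exp (-c)}))) ?_
    exact eventually_inf_principal.2 (Eventually.of_forall fun s hs => hs)
  have := Real.exp_pos (-c)
  linarith
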